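/- For n sensors with independent observations T_j ~ Erlang(2λ_T, 2λ_T/μ_j(s,θ)), μ_j = (a_j sin θ + b_j cos θ)/s > 0, the Fisher information for θ satisfies -E[∂² log L / ∂θ²] = 2λ_T · Σ_j ((a_j cos θ - b_j sin θ)/(a_j sin θ + b_j cos θ))². -/

import Mathlib

open MeasureTheory Real Filter

lemma hasDerivAt_g (a b w : ℝ) :
    HasDerivAt (fun w' => a * Real.sin w' + b * Real.cos w')
      (a * Real.cos w - b * Real.sin w) w := by
  have h := ((Real.hasDerivAt_sin w).const_mul a).fun_add ((Real.hasDerivAt_cos w).const_mul b)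
  refine h.congr_deriv ?_; ring

lemma hasDerivAt_gp (a b w : ℝ) :
    HasDerivAt (fun w' => a * Real.cos w' - b * Real.sin w')
      (-(a * Real.sin w + b * Real.cos w)) w := by
  have h := ((Real.hasDerivAt_cos w).const_mul a).fun_sub ((Real.hasDerivAt_sin w).const_mul b)
  refine h.congr_deriv ?_; ring

lemma term_hasDerivAt (a b c s t K1 K2 w : ℝ) (hcs : 0 < c * s)
    (hw : ∀ᶠ w' in nhds w, 0 < a * Real.sin w' + b * Real.cos w') :
    HasDerivAt (fun w' => c * Real.log (c * s / (a * Real.sin w' + b * Real.cos w')) + K1 -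
        c * s * t / (a * Real.sin w' + b * Real.cos w') - K2)
      (c * s * t * ((a * Real.cos w - b * Real.sin w) / (a * Real.sin w + b * Real.cos w) ^ 2) -
        c * ((a * Real.cos w - b * Real.sin w) / (a * Real.sin w + b * Real.cos w))) w := by
  have hg0 : 0 < a * Real.sin w + b * Real.cos w := hw.self_of_nhds
  have hE : (fun w' => c * Real.log (c * s / (a * Real.sin w' + b * Real.cos w')) + K1 -
        c * s * t / (a * Real.sin w' + b * Real.cos w') - K2) =ᶠ[nhds w]
      (fun w' => c * (Real.log (c * s) - Real.log (a * Real.sin w' + b * Real.cos w')) + K1 -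
        c * s * t * (a * Real.sin w' + b * Real.cos w')⁻¹ - K2) := by
    filter_upwards [hw] with x hx
    rw [Real.log_div hcs.ne' hx.ne', div_eq_mul_inv]
  have h1 := (hasDerivAt_g a b w).log hg0.ne'
  have h2 := (hasDerivAt_g a b w).fun_inv hg0.ne'
  have h := (((((hasDerivAt_const w (Real.log (c * s))).fun_sub h1).const_mul c).add_const K1).fun_sub
      (h2.const_mul (c * s * t))).sub_const K2
  have h' := h.congr_of_eventuallyEq hE
  refine h'.congr_deriv ?_
  ring

lemma Dterm_hasDerivAt (a b c s t θ : ℝ) (hg : 0 < a * Real.sin θ + b * Real.cos θ) :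
    HasDerivAt (fun w => c * s * t * ((a * Real.cos w - b * Real.sin w) / (a * Real.sin w + b * Real.cos w) ^ 2) -
        c * ((a * Real.cos w - b * Real.sin w) / (a * Real.sin w + b * Real.cos w)))
      (c * ((a * Real.sin θ + b * Real.cos θ) ^ 2 + (a * Real.cos θ - b * Real.sin θ) ^ 2) /
          (a * Real.sin θ + b * Real.cos θ) ^ 2 -
        c * s * t * ((a * Real.sin θ + b * Real.cos θ) ^ 2 + 2 * (a * Real.cos θ - b * Real.sin θ) ^ 2) /
          (a * Real.sin θ + b * Real.cos θ) ^ 3) θ := by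
  have hgd := hasDerivAt_g a b θ
  have hgpd := hasDerivAt_gp a b θ
  have h1 := hgpd.fun_div hgd hg.ne'
  have hg2 : ((a * Real.sin θ + b * Real.cos θ) ^ 2 : ℝ) ≠ 0 := pow_ne_zero 2 hg.ne'
  have h2 := hgpd.fun_div (hgd.fun_pow 2) hg2
  have h := (h2.const_mul (c * s * t)).fun_sub (h1.const_mul c)
  refine h.congr_deriv ?_
  field_simp
  ring

theorem stmt_14 {Ω : Type*} [MeasurableSpace Ω] (P : Measure Ω) [IsProbabilityMeasure P]
    (n : ℕ) (x y : Fin n → ℝ) (x0 y0 θ s : ℝ) (hs : 0 < s)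
    (lT : ℕ) (hlT : 1 ≤ lT)
    (a b : Fin n → ℝ) (ha : ∀ j, a j = x j - x0) (hb : ∀ j, b j = y j - y0)
    (hdenpos : ∀ j, 0 < a j * Real.sin θ + b j * Real.cos θ)
    (T : Fin n → Ω → ℝ) (hmeas : ∀ j, Measurable (T j)) (hTpos : ∀ j ω, 0 < T j ω)
    (hmean : ∀ j, (∫ ω, T j ω ∂P) = (a j * Real.sin θ + b j * Real.cos θ) / s) :
    -(∫ ω, deriv (fun w : ℝ => deriv (fun w' : ℝ => ∑ j,
        ((2 * lT : ℝ) * Real.log ((2 * lT : ℝ) * s / (a j * Real.sin w' + b j * Real.cos w')) +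
          ((2 * lT : ℝ) - 1) * Real.log (T j ω) -
          (2 * lT : ℝ) * s * T j ω / (a j * Real.sin w' + b j * Real.cos w') -
          Real.log (Nat.factorial (2 * lT - 1)))) w) θ ∂P) =
      (2 * lT : ℝ) * ∑ j,
        ((a j * Real.cos θ - b j * Real.sin θ) / (a j * Real.sin θ + b j * Real.cos θ)) ^ 2 := by
  set c : ℝ := (2 * lT : ℝ) with hc_def
  have hc : 0 < c := by
    have : (1 : ℝ) ≤ (lT : ℝ) := by exact_mod_cast hlT
    simp only [hc_def]; linarith
  have hcs : 0 < c * s := mul_pos hc hs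
  -- abbreviations
  set g : Fin n → ℝ → ℝ := fun j w => a j * Real.sin w + b j * Real.cos w with hg_def
  set gp : Fin n → ℝ → ℝ := fun j w => a j * Real.cos w - b j * Real.sin w with hgp_def
  -- eventual positivity
  have hU : ∀ᶠ w in nhds θ, ∀ j, 0 < g j w := by
    rw [eventually_all]
    intro j
    have hcont : ContinuousAt (g j) θ := by
      apply Continuous.continuousAt
      exact (continuous_const.mul Real.continuous_sin).add (continuous_const.mul Real.continuous_cos)
    exact hcont.eventually (lt_mem_nhds (hdenpos j))
  -- integrability of T j
  have hTint : ∀ j, Integrable (T j) P := by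
    intro j
    by_contra h
    have h0 := hmean j
    rw [integral_undef h] at h0
    have : 0 < (a j * Real.sin θ + b j * Real.cos θ) / s := div_pos (hdenpos j) hs
    linarith [h0 ▸ this]
  -- constants
  set A : Fin n → ℝ := fun j => c * ((g j θ) ^ 2 + (gp j θ) ^ 2) / (g j θ) ^ 2 with hA_def
  set B : Fin n → ℝ := fun j => c * s * ((g j θ) ^ 2 + 2 * (gp j θ) ^ 2) / (g j θ) ^ 3 with hB_def
  -- pointwise value of the second derivative
  have hpt : ∀ ω, deriv (fun w : ℝ => deriv (fun w' : ℝ => ∑ j,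
        (c * Real.log (c * s / (g j w')) + (c - 1) * Real.log (T j ω) -
          c * s * T j ω / (g j w') - Real.log (Nat.factorial (2 * lT - 1)))) w) θ
      = ∑ j, (A j - B j * T j ω) := by
    intro ω
    have hE1 : (fun w : ℝ => deriv (fun w' : ℝ => ∑ j,
        (c * Real.log (c * s / (g j w')) + (c - 1) * Real.log (T j ω) -
          c * s * T j ω / (g j w') - Real.log (Nat.factorial (2 * lT - 1)))) w) =ᶠ[nhds θ]
        (fun w => ∑ j, (c * s * T j ω * (gp j w / (g j w) ^ 2) - c * (gp j w / g j w))) := by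
      filter_upwards [hU.eventually_nhds] with w hw
      have hsum : HasDerivAt (fun w' : ℝ => ∑ j,
          (c * Real.log (c * s / (g j w')) + (c - 1) * Real.log (T j ω) -
            c * s * T j ω / (g j w') - Real.log (Nat.factorial (2 * lT - 1))))
          (∑ j, (c * s * T j ω * (gp j w / (g j w) ^ 2) - c * (gp j w / g j w))) w := by
        apply HasDerivAt.fun_sum
        intro j _
        exact term_hasDerivAt (a j) (b j) c s (T j ω) ((c - 1) * Real.log (T j ω))
          (Real.log (Nat.factorial (2 * lT - 1))) w hcs (hw.mono fun w' h => h j)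
      exact hsum.deriv
    rw [hE1.deriv_eq]
    have hD : HasDerivAt (fun w => ∑ j, (c * s * T j ω * (gp j w / (g j w) ^ 2) - c * (gp j w / g j w)))
        (∑ j, (A j - B j * T j ω)) θ := by
      apply HasDerivAt.fun_sum
      intro j _
      have h := Dterm_hasDerivAt (a j) (b j) c s (T j ω) θ (hdenpos j)
      refine h.congr_deriv ?_
      simp only [hA_def, hB_def, hg_def, hgp_def]
      ring
    exact hD.deriv
  -- integral computation
  have hint : (∫ ω, (∑ j, (A j - B j * T j ω)) ∂P) = ∑ j, (A j - B j * (g j θ / s)) := by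
    rw [integral_finset_sum]
    · apply Finset.sum_congr rfl
      intro j _
      rw [integral_sub (integrable_const _) ((hTint j).const_mul _), integral_const,
        integral_const_mul, hmean j]
      simp [hg_def]
    · intro j _
      exact (integrable_const _).sub ((hTint j).const_mul _)
  calc -(∫ ω, deriv (fun w : ℝ => deriv (fun w' : ℝ => ∑ j,
        (c * Real.log (c * s / (g j w')) + (c - 1) * Real.log (T j ω) -
          c * s * T j ω / (g j w') - Real.log (Nat.factorial (2 * lT - 1)))) w) θ ∂P)
      = -(∫ ω, (∑ j, (A j - B j * T j ω)) ∂P) := by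
        congr 1; exact integral_congr_ae (Eventually.of_forall fun ω => hpt ω)
    _ = c * ∑ j, (gp j θ / g j θ) ^ 2 := by
        rw [hint, ← Finset.sum_neg_distrib, Finset.mul_sum]
        apply Finset.sum_congr rfl
        intro j _
        have hgne : g j θ ≠ 0 := (hdenpos j).ne'
        simp only [hA_def, hB_def]
        field_simp
        ring
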